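/- Let m, n ≥ 1, let K₁, K₂ be disjoint compact subsets of M^{m×n}, and let ε > 0 be such that N_ε(K₁) ∩ N_ε(K₂) = ∅. Suppose W : [0,1] × M^{m×n} → ℝ ∪ {+∞}, written (τ, A) ↦ W_τ(A), satisfies: (H1)′ W is jointly lower semicontinuous on [0,1] × M^{m×n}, and for each fixed A the map τ ↦ W_τ(A) is continuous; (H2)′ W₀(A) ≥ 0 for all A, and W₀⁻¹(0) = K₁ ∪ K₂; (H3)′ min over N_ε(K₁) of W_τ equals 0 for every τ ∈ [0,1]; (H4)′ W_τ(A) ≥ c₀ + c₁|A|^p for all τ ∈ [0,1] and all A, where c₀ ∈ ℝ, c₁ > 0, p > 1. Then there exist α > 0, τ₀ ∈ (0,1], and a function δ : (0, τ₀) → (0, ∞) with δ(τ) → 0 as τ → 0+, such that for every τ ∈ (0, τ₀): (H3) min over N_{ε/2}(K₁) of W_τ equals 0 and W_τ(A) ≥ 0 for all A ∈ N_ε(K₁); (H4) W_τ(A) ≥ −δ(τ) for all A ∈ N_ε(K₂); (H5) W_τ(A) ≥ α for all A ∉ N_ε(K₁) ∪ N_ε(K₂). -/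

import Mathlib

open MeasureTheory Matrix Pointwise ENNReal

noncomputable section

namespace Incompat

/-- The rotation group `SO(n)` as a set of `n × n` real matrices. -/
def SO (n : ℕ) : Set (Matrix (Fin n) (Fin n) ℝ) :=
  {Q | Qᵀ * Q = 1 ∧ Q.det = 1}

/-- The image of a set `S ⊆ ℝⁿ` under the rigid motion `x ↦ ξ + Q x`. -/
def rigidImage {n : ℕ} (ξ : EuclideanSpace ℝ (Fin n)) (Q : Matrix (Fin n) (Fin n) ℝ)
    (S : Set (EuclideanSpace ℝ (Fin n))) : Set (EuclideanSpace ℝ (Fin n)) :=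
  (fun x => ξ + Matrix.toEuclideanLin Q x) '' S

/-- `C₁`, `C₂` are congruently connected in `Ω` as rigid copies of `C`. -/
def CongrConn {n : ℕ} (Ω C C₁ C₂ : Set (EuclideanSpace ℝ (Fin n))) : Prop :=
  ∃ ξ : ℝ → EuclideanSpace ℝ (Fin n), ∃ Q : ℝ → Matrix (Fin n) (Fin n) ℝ,
    ContinuousOn ξ (Set.Icc 0 1) ∧ ContinuousOn Q (Set.Icc 0 1) ∧
    (∀ t ∈ Set.Icc (0:ℝ) 1, Q t ∈ SO n) ∧
    C₁ = rigidImage (ξ 0) (Q 0) C ∧ C₂ = rigidImage (ξ 1) (Q 1) C ∧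
    ∀ t ∈ Set.Icc (0:ℝ) 1, rigidImage (ξ t) (Q t) C ⊆ Ω

/-- `Ω` is `C`-filled: every point of `Ω` lies in a subset of `Ω` directly congruent to `C`. -/
def IsCFilled {n : ℕ} (Ω C : Set (EuclideanSpace ℝ (Fin n))) : Prop :=
  ∀ x ∈ Ω, ∃ ξ Q, Q ∈ SO n ∧ x ∈ rigidImage ξ Q C ∧ rigidImage ξ Q C ⊆ Ω

/-- `Ω` is `C`-connected: some family of pairwise congruently connected rigid copies of `C`
inside `Ω` (an equivalence class of `∼`) covers `Ω`. -/
def IsCConnected {n : ℕ} (Ω C : Set (EuclideanSpace ℝ (Fin n))) : Prop :=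
  ∃ 𝒞 : Set (Set (EuclideanSpace ℝ (Fin n))),
    (∀ D ∈ 𝒞, D ⊆ Ω) ∧
    (∀ D₁ ∈ 𝒞, ∀ D₂ ∈ 𝒞, CongrConn Ω C D₁ D₂) ∧
    Ω ⊆ ⋃₀ 𝒞

/-- The Frobenius norm of a matrix. -/
def frobNorm {m n : ℕ} (A : Matrix (Fin m) (Fin n) ℝ) : ℝ :=
  Real.sqrt (∑ i, ∑ j, (A i j) ^ 2)

/-- `N_ε(K)`: the closed `ε`-neighbourhood of `K` in the Frobenius norm. -/
def Nbhd {m n : ℕ} (K : Set (Matrix (Fin m) (Fin n) ℝ)) (ε : ℝ) :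
    Set (Matrix (Fin m) (Fin n) ℝ) :=
  {A | ∃ B ∈ K, frobNorm (A - B) ≤ ε}

/-- The (a.e.-defined) gradient of `y` at `x`, as a matrix: `(Dy)ᵢⱼ = ∂yᵢ/∂xⱼ`. -/
def Dmat {m n : ℕ} (y : EuclideanSpace ℝ (Fin n) → EuclideanSpace ℝ (Fin m))
    (x : EuclideanSpace ℝ (Fin n)) : Matrix (Fin m) (Fin n) ℝ :=
  Matrix.of fun i j => fderiv ℝ y x (EuclideanSpace.single j 1) i

/-- The matrix `A` regarded as a continuous linear map `ℝⁿ → ℝᵐ`. -/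
def toCLM {m n : ℕ} (A : Matrix (Fin m) (Fin n) ℝ) :
    EuclideanSpace ℝ (Fin n) →L[ℝ] EuclideanSpace ℝ (Fin m) :=
  LinearMap.toContinuousLinearMap (Matrix.toEuclideanLin A)

/-- `Ω_{K,ε}(y) = {x ∈ Ω : Dy(x) ∈ N_ε(K)}`. -/
def phaseSet {m n : ℕ} (Ω : Set (EuclideanSpace ℝ (Fin n)))
    (y : EuclideanSpace ℝ (Fin n) → EuclideanSpace ℝ (Fin m))
    (K : Set (Matrix (Fin m) (Fin n) ℝ)) (ε : ℝ) : Set (EuclideanSpace ℝ (Fin n)) :=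
  {x ∈ Ω | Dmat y x ∈ Nbhd K ε}

/-- The transition layer `T_ε(y) = {x ∈ Ω : Dy(x) ∉ N_ε(K₁) ∪ N_ε(K₂)}`. -/
def transLayer {m n : ℕ} (Ω : Set (EuclideanSpace ℝ (Fin n)))
    (y : EuclideanSpace ℝ (Fin n) → EuclideanSpace ℝ (Fin m))
    (K₁ K₂ : Set (Matrix (Fin m) (Fin n) ℝ)) (ε : ℝ) : Set (EuclideanSpace ℝ (Fin n)) :=
  {x ∈ Ω | Dmat y x ∉ Nbhd K₁ ε ∪ Nbhd K₂ ε}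

/-- `x.toENNReal` for `x : EReal` (not yet in this Mathlib version). -/
def erealToENNReal (x : EReal) : ℝ≥0∞ :=
  if x = ⊤ then ⊤ else ENNReal.ofReal x.toReal

/-- The integral of an `ℝ ∪ {±∞}`-valued function `g` over `G`, defined as the difference of the
lower integrals of the positive and negative parts (well defined, with value in `ℝ ∪ {+∞}`,
whenever the negative part has finite integral, e.g. when `g` is bounded below and `G` has
finite measure). -/
def eintegral {n : ℕ} (G : Set (EuclideanSpace ℝ (Fin n)))
    (g : EuclideanSpace ℝ (Fin n) → EReal) : EReal :=
  ((∫⁻ x in G, erealToENNReal (g x)) : ℝ≥0∞) -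
    (((∫⁻ x in G, erealToENNReal (-(g x))) : ℝ≥0∞) : EReal)

/-- The outer radius `R(C)`. -/
def outerRad {n : ℕ} (C : Set (EuclideanSpace ℝ (Fin n))) : ℝ :=
  sInf {ρ : ℝ | 0 < ρ ∧ ∃ a, C ⊆ Metric.ball a ρ}

/-- The inner radius `r(C)`. -/
def innerRad {n : ℕ} (C : Set (EuclideanSpace ℝ (Fin n))) : ℝ :=
  sSup {ρ : ℝ | 0 < ρ ∧ ∃ a, Metric.ball a ρ ⊆ C}

/-- The eccentricity `E(C) = √(1 − r(C)²/R(C)²)`. -/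
def eccentricity {n : ℕ} (C : Set (EuclideanSpace ℝ (Fin n))) : ℝ :=
  Real.sqrt (1 - innerRad C ^ 2 / outerRad C ^ 2)

end Incompat

open Incompat NNReal Bornology

namespace MyAux

variable {m n : ℕ}

instance : FirstCountableTopology (Matrix (Fin m) (Fin n) ℝ) :=
  inferInstanceAs (FirstCountableTopology (Fin m → Fin n → ℝ))

lemma frob_nonneg (A : Matrix (Fin m) (Fin n) ℝ) : 0 ≤ frobNorm A := Real.sqrt_nonneg _

lemma frob_cont : Continuous (fun A : Matrix (Fin m) (Fin n) ℝ => frobNorm A) := by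
  unfold frobNorm
  apply Real.continuous_sqrt.comp
  fun_prop

lemma frob_zero : frobNorm (0 : Matrix (Fin m) (Fin n) ℝ) = 0 := by
  simp [frobNorm]

lemma abs_entry_le (A : Matrix (Fin m) (Fin n) ℝ) (i : Fin m) (j : Fin n) :
    |A i j| ≤ frobNorm A := by
  rw [← Real.sqrt_sq_eq_abs]
  apply Real.sqrt_le_sqrt
  calc A i j ^ 2 ≤ ∑ j', (A i j') ^ 2 :=
        Finset.single_le_sum (f := fun j' => (A i j') ^ 2)
          (fun j' _ => sq_nonneg _) (Finset.mem_univ j)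
    _ ≤ ∑ i', ∑ j', (A i' j') ^ 2 :=
        Finset.single_le_sum (f := fun i' => ∑ j', (A i' j') ^ 2)
          (fun i' _ => Finset.sum_nonneg fun j' _ => sq_nonneg _) (Finset.mem_univ i)

lemma isCompact_frob_ball (ε : ℝ) :
    IsCompact {D : Matrix (Fin m) (Fin n) ℝ | frobNorm D ≤ ε} := by
  have hclosed : IsClosed {D : Matrix (Fin m) (Fin n) ℝ | frobNorm D ≤ ε} :=
    isClosed_le frob_cont continuous_const
  have hsub : {D : Matrix (Fin m) (Fin n) ℝ | frobNorm D ≤ ε} ⊆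
      Set.univ.pi (fun _ : Fin m => Set.univ.pi fun _ : Fin n => Set.Icc (-ε) ε) := by
    intro D hD i _ j _
    have := (abs_le.mp ((abs_entry_le D i j).trans hD))
    exact ⟨this.1, this.2⟩
  exact (isCompact_univ_pi fun _ => isCompact_univ_pi fun _ => isCompact_Icc).of_isClosed_subset
    hclosed hsub

lemma isCompact_nbhd {K : Set (Matrix (Fin m) (Fin n) ℝ)} (hK : IsCompact K) (ε : ℝ) :
    IsCompact (Nbhd K ε) := by
  have : Nbhd K ε = (fun p : Matrix (Fin m) (Fin n) ℝ × Matrix (Fin m) (Fin n) ℝ =>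
      p.1 + p.2) '' (K ×ˢ {D | frobNorm D ≤ ε}) := by
    ext A
    constructor
    · rintro ⟨B, hB, hAB⟩
      exact ⟨(B, A - B), ⟨hB, hAB⟩, by show B + (A - B) = A; rw [add_comm, sub_add_cancel]⟩
    · rintro ⟨⟨B, D⟩, ⟨hB, hD⟩, rfl⟩
      exact ⟨B, hB, by simpa using hD⟩
  rw [this]
  exact (hK.prod (isCompact_frob_ball ε)).image (by fun_prop)

lemma subset_nbhd {K : Set (Matrix (Fin m) (Fin n) ℝ)} {ε : ℝ} (hε : 0 ≤ ε) :
    K ⊆ Nbhd K ε := fun B hB => ⟨B, hB, by simp [frob_zero, hε]⟩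

lemma notMem_closure {K S : Set (Matrix (Fin m) (Fin n) ℝ)} {ε : ℝ} (hε : 0 < ε)
    (hS : S ⊆ (Nbhd K ε)ᶜ) {B : Matrix (Fin m) (Fin n) ℝ} (hB : B ∈ K) :
    B ∉ closure S := by
  intro hBc
  have hopen : IsOpen {C : Matrix (Fin m) (Fin n) ℝ | frobNorm (C - B) < ε} :=
    isOpen_lt (frob_cont.comp (by fun_prop)) continuous_const
  have hBmem : B ∈ {C : Matrix (Fin m) (Fin n) ℝ | frobNorm (C - B) < ε} := by
    simp [frob_zero, hε]
  obtain ⟨C, hC1, hC2⟩ := mem_closure_iff.mp hBc _ hopen hBmem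
  exact hS hC2 ⟨B, hB, le_of_lt hC1⟩

lemma aux_uniform (W : ℝ → Matrix (Fin m) (Fin n) ℝ → EReal)
    (H1a : LowerSemicontinuousOn (fun q : ℝ × Matrix (Fin m) (Fin n) ℝ => W q.1 q.2)
      (Set.Icc (0:ℝ) 1 ×ˢ (Set.univ : Set (Matrix (Fin m) (Fin n) ℝ))))
    (S : Set (Matrix (Fin m) (Fin n) ℝ)) (hS : IsCompact S)
    (b : ℝ) (hb : ∀ A ∈ S, (b : EReal) < W 0 A) :
    ∃ τ₀ > (0:ℝ), ∀ τ, 0 ≤ τ → τ < τ₀ → ∀ A ∈ S, (b : EReal) ≤ W τ A := by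
  by_contra h
  push_neg at h
  have hex : ∀ k : ℕ, ∃ τ : ℝ, 0 ≤ τ ∧ τ < 1/((k:ℝ)+1) ∧ ∃ A ∈ S, W τ A < (b : EReal) := by
    intro k
    obtain ⟨τ, hτ0, hτlt, A, hA, hW⟩ := h (1/((k:ℝ)+1)) (by positivity)
    exact ⟨τ, hτ0, hτlt, A, hA, hW⟩
  choose τ hτ0 hτlt A hAS hW using hex
  obtain ⟨A₀, hA₀S, φ, hφ, hAconv⟩ := hS.tendsto_subseq hAS
  have hτconv : Filter.Tendsto (fun k => τ (φ k)) Filter.atTop (nhds 0) := by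
    apply squeeze_zero (fun k => hτ0 (φ k)) (fun k => le_of_lt (hτlt (φ k)))
    exact (tendsto_one_div_add_atTop_nhds_zero_nat).comp hφ.tendsto_atTop
  have hmem : ∀ k, ((τ (φ k), A (φ k)) : ℝ × Matrix (Fin m) (Fin n) ℝ) ∈
      Set.Icc (0:ℝ) 1 ×ˢ (Set.univ : Set (Matrix (Fin m) (Fin n) ℝ)) := by
    intro k
    refine ⟨⟨hτ0 (φ k), ?_⟩, trivial⟩
    have h1 : (1:ℝ)/((φ k : ℝ)+1) ≤ 1 := by
      rw [div_le_one (by positivity)]; have := Nat.cast_nonneg (α := ℝ) (φ k); linarith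
    exact le_of_lt (lt_of_lt_of_le (hτlt (φ k)) h1)
  have hconv : Filter.Tendsto (fun k => ((τ (φ k), A (φ k)) :
      ℝ × Matrix (Fin m) (Fin n) ℝ)) Filter.atTop
      (nhdsWithin (0, A₀) (Set.Icc (0:ℝ) 1 ×ˢ Set.univ)) :=
    tendsto_nhdsWithin_of_tendsto_nhds_of_eventually_within _
      (hτconv.prodMk_nhds hAconv) (Filter.Eventually.of_forall hmem)
  have hlsc := H1a (0, A₀) ⟨⟨le_refl 0, zero_le_one⟩, trivial⟩ (b : EReal) (hb A₀ hA₀S)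
  obtain ⟨k, hk⟩ := (hconv.eventually hlsc).exists
  exact absurd (hW (φ k)) (not_lt.mpr (le_of_lt hk))

lemma aux_pos (W : ℝ → Matrix (Fin m) (Fin n) ℝ → EReal)
    (H1a : LowerSemicontinuousOn (fun q : ℝ × Matrix (Fin m) (Fin n) ℝ => W q.1 q.2)
      (Set.Icc (0:ℝ) 1 ×ˢ (Set.univ : Set (Matrix (Fin m) (Fin n) ℝ))))
    (S : Set (Matrix (Fin m) (Fin n) ℝ)) (hS : IsCompact S)
    (hb : ∀ A ∈ S, (0 : EReal) < W 0 A) :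
    ∃ α > (0:ℝ), ∃ τ₀ > (0:ℝ), ∀ τ, 0 ≤ τ → τ < τ₀ → ∀ A ∈ S, ((α:ℝ) : EReal) ≤ W τ A := by
  by_contra h
  push_neg at h
  have hex : ∀ k : ℕ, ∃ τ : ℝ, 0 ≤ τ ∧ τ < 1/((k:ℝ)+1) ∧
      ∃ A ∈ S, W τ A < ((1/((k:ℝ)+1) : ℝ) : EReal) := by
    intro k
    obtain ⟨τ, hτ0, hτlt, A, hA, hW⟩ := h (1/((k:ℝ)+1)) (by positivity) (1/((k:ℝ)+1))
      (by positivity)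
    exact ⟨τ, hτ0, hτlt, A, hA, hW⟩
  choose τ hτ0 hτlt A hAS hW using hex
  obtain ⟨A₀, hA₀S, φ, hφ, hAconv⟩ := hS.tendsto_subseq hAS
  have hτconv : Filter.Tendsto (fun k => τ (φ k)) Filter.atTop (nhds 0) := by
    apply squeeze_zero (fun k => hτ0 (φ k)) (fun k => le_of_lt (hτlt (φ k)))
    exact (tendsto_one_div_add_atTop_nhds_zero_nat).comp hφ.tendsto_atTop
  have hmem : ∀ k, ((τ (φ k), A (φ k)) : ℝ × Matrix (Fin m) (Fin n) ℝ) ∈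
      Set.Icc (0:ℝ) 1 ×ˢ (Set.univ : Set (Matrix (Fin m) (Fin n) ℝ)) := by
    intro k
    refine ⟨⟨hτ0 (φ k), ?_⟩, trivial⟩
    have h1 : (1:ℝ)/((φ k : ℝ)+1) ≤ 1 := by
      rw [div_le_one (by positivity)]; have := Nat.cast_nonneg (α := ℝ) (φ k); linarith
    exact le_of_lt (lt_of_lt_of_le (hτlt (φ k)) h1)
  have hconv : Filter.Tendsto (fun k => ((τ (φ k), A (φ k)) :
      ℝ × Matrix (Fin m) (Fin n) ℝ)) Filter.atTop
      (nhdsWithin (0, A₀) (Set.Icc (0:ℝ) 1 ×ˢ Set.univ)) :=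
    tendsto_nhdsWithin_of_tendsto_nhds_of_eventually_within _
      (hτconv.prodMk_nhds hAconv) (Filter.Eventually.of_forall hmem)
  obtain ⟨r, hr0, hrW⟩ := EReal.exists_between_coe_real (hb A₀ hA₀S)
  have hr0' : (0:ℝ) < r := by exact_mod_cast hr0
  have hlsc := H1a (0, A₀) ⟨⟨le_refl 0, zero_le_one⟩, trivial⟩ (r : EReal) hrW
  have hsmall : ∀ᶠ k in Filter.atTop, (1:ℝ)/((φ k : ℝ)+1) ≤ r := by
    have := (tendsto_one_div_add_atTop_nhds_zero_nat (𝕜 := ℝ)).comp hφ.tendsto_atTop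
    exact this.eventually_le_const hr0'
  obtain ⟨k, hk1, hk2⟩ := ((hconv.eventually hlsc).and hsmall).exists
  have : (r : EReal) < (r : EReal) := by
    calc (r : EReal) < W (τ (φ k)) (A (φ k)) := hk1
      _ < ((1/((φ k:ℝ)+1) : ℝ) : EReal) := hW (φ k)
      _ ≤ (r : EReal) := by exact_mod_cast hk2
  exact lt_irrefl _ this

end MyAux


/-- Proposition on perturbed energies: (H1)′–(H4)′ imply (H3)–(H5) with
`δ(τ) → 0`. -/
theorem perturbed_energy_hypotheses
    (m n : ℕ) (hm : 1 ≤ m) (hn : 1 ≤ n)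
    (K₁ K₂ : Set (Matrix (Fin m) (Fin n) ℝ)) (hK₁ : IsCompact K₁) (hK₂ : IsCompact K₂)
    (hdisj : Disjoint K₁ K₂) (ε : ℝ) (hε : 0 < ε)
    (hNdisj : Nbhd K₁ ε ∩ Nbhd K₂ ε = ∅)
    (W : ℝ → Matrix (Fin m) (Fin n) ℝ → EReal)
    (c₀ c₁ p : ℝ) (hc₁ : 0 < c₁) (hp : 1 < p)
    (H1a : LowerSemicontinuousOn (fun q : ℝ × Matrix (Fin m) (Fin n) ℝ => W q.1 q.2)
      (Set.Icc (0:ℝ) 1 ×ˢ (Set.univ : Set (Matrix (Fin m) (Fin n) ℝ))))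
    (H1b : ∀ A, ContinuousOn (fun τ => W τ A) (Set.Icc (0:ℝ) 1))
    (H2a : ∀ A, 0 ≤ W 0 A) (H2b : {A | W 0 A = 0} = K₁ ∪ K₂)
    (H3 : ∀ τ ∈ Set.Icc (0:ℝ) 1,
      (∃ A ∈ Nbhd K₁ ε, W τ A = 0) ∧ ∀ A ∈ Nbhd K₁ ε, 0 ≤ W τ A)
    (H4 : ∀ τ ∈ Set.Icc (0:ℝ) 1, ∀ A,
      ((c₀ + c₁ * frobNorm A ^ p : ℝ) : EReal) ≤ W τ A) :
    ∃ α > (0:ℝ), ∃ τ₀ : ℝ, 0 < τ₀ ∧ τ₀ ≤ 1 ∧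
      ∃ δ : ℝ → ℝ,
        Filter.Tendsto δ (nhdsWithin 0 (Set.Ioi 0)) (nhds 0) ∧
        ∀ τ : ℝ, 0 < τ → τ < τ₀ →
          0 < δ τ ∧
          (∃ A ∈ Nbhd K₁ (ε/2), W τ A = 0) ∧
          (∀ A ∈ Nbhd K₁ ε, 0 ≤ W τ A) ∧
          (∀ A ∈ Nbhd K₂ ε, ((-(δ τ) : ℝ) : EReal) ≤ W τ A) ∧
          (∀ A ∉ Nbhd K₁ ε ∪ Nbhd K₂ ε, ((α : ℝ) : EReal) ≤ W τ A) := by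
  
  classical
  have hε2 : (0:ℝ) < ε/2 := by linarith
  -- positivity of W₀ off K₁ ∪ K₂
  have hW0pos : ∀ A : Matrix (Fin m) (Fin n) ℝ, A ∉ K₁ ∪ K₂ → (0:EReal) < W 0 A := by
    intro A hA
    refine lt_of_le_of_ne (H2a A) fun h => hA ?_
    rw [← H2b]; exact h.symm
  -- the coercivity radius
  set R : ℝ := max 1 ((1 - c₀)/c₁) with hR
  have hcoer : ∀ τ ∈ Set.Icc (0:ℝ) 1, ∀ A : Matrix (Fin m) (Fin n) ℝ,
      R ≤ frobNorm A → (1 : EReal) ≤ W τ A := by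
    intro τ hτ A hRA
    have h1A : (1:ℝ) ≤ frobNorm A := le_trans (le_max_left _ _) hRA
    have h2 : frobNorm A ≤ frobNorm A ^ p := by
      nth_rewrite 1 [← Real.rpow_one (frobNorm A)]
      exact Real.rpow_le_rpow_of_exponent_le h1A (le_of_lt hp)
    have h3 : (1 - c₀)/c₁ ≤ frobNorm A := le_trans (le_max_right _ _) hRA
    have h4 : 1 - c₀ ≤ c₁ * frobNorm A := by
      rw [div_le_iff₀ hc₁] at h3; linarith [h3]
    have h5 : c₁ * frobNorm A ≤ c₁ * frobNorm A ^ p :=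
      mul_le_mul_of_nonneg_left h2 (le_of_lt hc₁)
    have h6 : (1:ℝ) ≤ c₀ + c₁ * frobNorm A ^ p := by linarith
    calc (1 : EReal) ≤ ((c₀ + c₁ * frobNorm A ^ p : ℝ) : EReal) := by exact_mod_cast h6
      _ ≤ W τ A := H4 τ hτ A
  -- compact set S₁ away from the neighbourhoods, within the coercivity ball
  set S₁ : Set (Matrix (Fin m) (Fin n) ℝ) :=
    closure ({A | frobNorm A ≤ R} \ (Nbhd K₁ ε ∪ Nbhd K₂ ε)) with hS₁def
  have hS₁sub : S₁ ⊆ {A | frobNorm A ≤ R} :=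
    closure_minimal Set.diff_subset (isClosed_le MyAux.frob_cont continuous_const)
  have hS₁cpt : IsCompact S₁ :=
    (MyAux.isCompact_frob_ball R).of_isClosed_subset isClosed_closure hS₁sub
  have hS₁pos : ∀ A ∈ S₁, (0:EReal) < W 0 A := by
    intro A hA
    apply hW0pos
    rintro (h1 | h2)
    · exact MyAux.notMem_closure hε
        (fun C hC => fun hCN => hC.2 (Or.inl hCN)) h1 hA
    · exact MyAux.notMem_closure hε
        (fun C hC => fun hCN => hC.2 (Or.inr hCN)) h2 hA
  obtain ⟨α₁, hα₁, τa, hτa, hS₁bd⟩ := MyAux.aux_pos W H1a S₁ hS₁cpt hS₁pos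
  -- compact annulus T around K₁
  set T : Set (Matrix (Fin m) (Fin n) ℝ) :=
    closure (Nbhd K₁ ε \ Nbhd K₁ (ε/2)) with hTdef
  have hTsub : T ⊆ Nbhd K₁ ε :=
    closure_minimal Set.diff_subset (MyAux.isCompact_nbhd hK₁ ε).isClosed
  have hTcpt : IsCompact T :=
    (MyAux.isCompact_nbhd hK₁ ε).of_isClosed_subset isClosed_closure hTsub
  have hTpos : ∀ A ∈ T, (0:EReal) < W 0 A := by
    intro A hA
    apply hW0pos
    rintro (h1 | h2)
    · exact MyAux.notMem_closure hε2 (fun C hC => hC.2) h1 hA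
    · have hA1 : A ∈ Nbhd K₁ ε := hTsub hA
      have hA2 : A ∈ Nbhd K₂ ε := MyAux.subset_nbhd (le_of_lt hε) h2
      have : A ∈ Nbhd K₁ ε ∩ Nbhd K₂ ε := ⟨hA1, hA2⟩
      rw [hNdisj] at this
      exact this
  obtain ⟨α₂, hα₂, τb, hτb, hTbd⟩ := MyAux.aux_pos W H1a T hTcpt hTpos
  -- the global constants
  refine ⟨min α₁ 1, lt_min hα₁ one_pos, min (min τa τb) 1,
    lt_min (lt_min hτa hτb) one_pos, min_le_right _ _, ?_⟩
  -- the function δ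
  set mval : ℝ → EReal := fun τ => sInf ((W τ) '' Nbhd K₂ ε) with hmval
  set g : ℝ → ℝ := fun τ => max 0 (-(mval τ).toReal) with hg
  set δ : ℝ → ℝ := fun τ => τ + g τ with hδ
  have hgnn : ∀ τ, 0 ≤ g τ := fun τ => le_max_left _ _
  -- small g for small τ
  have hgsmall : ∀ η : ℝ, 0 < η → ∃ d > (0:ℝ), ∀ τ, 0 ≤ τ → τ < d → g τ ≤ η/2 := by
    intro η hη
    have hb : ∀ A ∈ Nbhd K₂ ε, ((-(η/2) : ℝ) : EReal) < W 0 A := by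
      intro A _
      refine lt_of_lt_of_le ?_ (H2a A)
      exact_mod_cast (by linarith : -(η/2) < (0:ℝ))
    obtain ⟨d, hd, hbd⟩ := MyAux.aux_uniform W H1a (Nbhd K₂ ε)
      (MyAux.isCompact_nbhd hK₂ ε) (-(η/2)) hb
    refine ⟨min d 1, lt_min hd one_pos, fun τ hτ0 hτd => ?_⟩
    have hτd' : τ < d := lt_of_lt_of_le hτd (min_le_left _ _)
    have hmge : ((-(η/2) : ℝ) : EReal) ≤ mval τ := by
      apply le_sInf
      rintro x ⟨A, hA, rfl⟩
      exact hbd τ hτ0 hτd' A hA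
    by_cases htop : mval τ = ⊤
    · simp only [hg, htop, EReal.toReal_top, neg_zero, max_self]
      linarith
    · have hbot : mval τ ≠ ⊥ := by
        intro hb'
        rw [hb'] at hmge
        exact (EReal.bot_lt_coe _).not_ge hmge
      have : -(η/2) ≤ (mval τ).toReal := by
        have := EReal.toReal_le_toReal hmge (EReal.coe_ne_bot _) htop
        simpa using this
      simp only [hg]
      apply max_le (by linarith) (by linarith)
  -- tendsto δ → 0
  have hδtend : Filter.Tendsto δ (nhdsWithin 0 (Set.Ioi 0)) (nhds 0) := by
    rw [Metric.tendsto_nhdsWithin_nhds]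
    intro η hη
    obtain ⟨d, hd, hbd⟩ := hgsmall η hη
    refine ⟨min d (η/2), lt_min hd (by linarith), fun {τ} hτ hdist => ?_⟩
    have hτ0 : 0 < τ := hτ
    rw [Real.dist_eq, sub_zero, abs_of_pos hτ0] at hdist
    have h1 : τ < d := lt_of_lt_of_le hdist (min_le_left _ _)
    have h2 : τ < η/2 := lt_of_lt_of_le hdist (min_le_right _ _)
    have h3 : g τ ≤ η/2 := hbd τ (le_of_lt hτ0) h1
    show dist (τ + g τ) 0 < η
    rw [Real.dist_eq, sub_zero, abs_of_pos (by linarith [hgnn τ])]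
    linarith
  refine ⟨δ, hδtend, fun τ hτ0 hττ₀ => ?_⟩
  have hτa' : τ < τa := lt_of_lt_of_le hττ₀ (le_trans (min_le_left _ _) (min_le_left _ _))
  have hτb' : τ < τb := lt_of_lt_of_le hττ₀ (le_trans (min_le_left _ _) (min_le_right _ _))
  have hτ1 : τ ≤ 1 := le_of_lt (lt_of_lt_of_le hττ₀ (min_le_right _ _))
  have hτIcc : τ ∈ Set.Icc (0:ℝ) 1 := ⟨le_of_lt hτ0, hτ1⟩
  refine ⟨(by linarith [hgnn τ] : (0:ℝ) < τ + g τ), ?_, (H3 τ hτIcc).2, ?_, ?_⟩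
  · -- minimiser in the half neighbourhood
    obtain ⟨A₀, hA₀, hWA₀⟩ := (H3 τ hτIcc).1
    by_cases hhalf : A₀ ∈ Nbhd K₁ (ε/2)
    · exact ⟨A₀, hhalf, hWA₀⟩
    · exfalso
      have hA₀T : A₀ ∈ T := subset_closure ⟨hA₀, hhalf⟩
      have := hTbd τ (le_of_lt hτ0) hτb' A₀ hA₀T
      rw [hWA₀] at this
      exact (EReal.coe_pos.mpr hα₂).not_ge this
  · -- lower bound on N_ε(K₂)
    intro A hA
    have hμle : mval τ ≤ W τ A := sInf_le ⟨A, hA, rfl⟩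
    by_cases hneg : mval τ < 0
    · have hμtop : mval τ ≠ ⊤ := ne_top_of_lt hneg
      have hμbot : mval τ ≠ ⊥ := by
        have hc : ((c₀ : ℝ) : EReal) ≤ mval τ := by
          apply le_sInf
          rintro x ⟨A', _, rfl⟩
          refine le_trans ?_ (H4 τ hτIcc A')
          have : (c₀ : ℝ) ≤ c₀ + c₁ * frobNorm A' ^ p := by
            have := mul_nonneg (le_of_lt hc₁) (Real.rpow_nonneg (MyAux.frob_nonneg A') p)
            linarith
          exact_mod_cast this
        intro hb'
        rw [hb'] at hc
        exact (EReal.bot_lt_coe _).not_ge hc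
      have hreal : -(δ τ) ≤ (mval τ).toReal := by
        show -(τ + max 0 (-(mval τ).toReal)) ≤ (mval τ).toReal
        have := le_max_right (0:ℝ) (-(mval τ).toReal)
        linarith
      calc ((-(δ τ) : ℝ) : EReal) ≤ (((mval τ).toReal : ℝ) : EReal) := by exact_mod_cast hreal
        _ = mval τ := EReal.coe_toReal hμtop hμbot
        _ ≤ W τ A := hμle
    · push_neg at hneg
      have hδpos : (0:ℝ) < δ τ := (by linarith [hgnn τ] : (0:ℝ) < τ + g τ)
      calc ((-(δ τ) : ℝ) : EReal) ≤ (0 : EReal) := by exact_mod_cast (by linarith : -(δ τ) ≤ (0:ℝ))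
        _ ≤ mval τ := hneg
        _ ≤ W τ A := hμle
  · -- lower bound on the transition region
    intro A hA
    by_cases hfrob : frobNorm A ≤ R
    · have hAS₁ : A ∈ S₁ := subset_closure ⟨hfrob, hA⟩
      refine le_trans ?_ (hS₁bd τ (le_of_lt hτ0) hτa' A hAS₁)
      exact_mod_cast min_le_left α₁ 1
    · push_neg at hfrob
      refine le_trans ?_ (hcoer τ hτIcc A (le_of_lt hfrob))
      have : min α₁ 1 ≤ (1:ℝ) := min_le_right _ _
      calc ((min α₁ 1 : ℝ) : EReal) ≤ ((1:ℝ) : EReal) := by exact_mod_cast this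
        _ = (1 : EReal) := by norm_cast
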